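/- Let k ≥ 1 be a fixed integer and λ > 0. Define f_k(λ) = Σ_{i≥k} λ^i/i!. Then the function λ ↦ λ f_{k−1}(λ)/f_k(λ) is strictly increasing on (0,∞), tends to k as λ → 0⁺, and tends to ∞ as λ → ∞; consequently, for every c > k there is a unique λ > 0 with c = λ f_{k−1}(λ)/f_k(λ). -/

import Mathlib

open Real Filter

/-- `fk k x = ∑_{i ≥ k} x^i / i!`, the tail of the exponential series. -/
noncomputable def fk (k : ℕ) (x : ℝ) : ℝ :=
  ∑' i : ℕ, if k ≤ i then x ^ i / (Nat.factorial i : ℝ) else 0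

namespace Stmt1Aux

open scoped Nat

noncomputable def d (k : ℕ) (x : ℝ) (m : ℕ) : ℝ :=
  if k ≤ m then x ^ m / (m ! : ℝ) else 0

noncomputable def e (k : ℕ) (x : ℝ) (m : ℕ) : ℝ :=
  if k ≤ m then (m : ℝ) * x ^ m / (m ! : ℝ) else 0

lemma d_nonneg (k : ℕ) {x : ℝ} (hx : 0 ≤ x) (m : ℕ) : 0 ≤ d k x m := by
  unfold d; split_ifs <;> positivity

lemma e_nonneg (k : ℕ) {x : ℝ} (hx : 0 ≤ x) (m : ℕ) : 0 ≤ e k x m := by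
  unfold e; split_ifs <;> positivity

lemma summable_d (k : ℕ) (x : ℝ) : Summable (d k x) := by
  refine Summable.of_norm_bounded (Real.summable_pow_div_factorial |x|) fun i => ?_
  unfold d
  split_ifs
  · rw [Real.norm_eq_abs, abs_div, abs_pow, Nat.abs_cast]
  · simp only [norm_zero]
    positivity

lemma summable_e (k : ℕ) {x : ℝ} (hx : 0 ≤ x) : Summable (e k x) := by
  refine Summable.of_nonneg_of_le (e_nonneg k hx) (fun m => ?_)
    (Real.summable_pow_div_factorial (2 * x))
  unfold e
  split_ifs with h
  · have hm : (m : ℝ) ≤ 2 ^ m := by exact_mod_cast (Nat.lt_two_pow_self (n := m)).le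
    rw [mul_pow]
    have : (m : ℝ) * x ^ m ≤ 2 ^ m * x ^ m :=
      mul_le_mul_of_nonneg_right hm (by positivity)
    exact div_le_div_of_nonneg_right this (by positivity) |>.trans_eq rfl
  · positivity

lemma fk_eq_tsum_d (k : ℕ) (x : ℝ) : fk k x = ∑' m, d k x m := rfl

lemma summable_shift (k : ℕ) (x : ℝ) :
    Summable (fun i : ℕ => x ^ (k + i) / ((k + i)! : ℝ)) := by
  have := (summable_nat_add_iff k).mpr (Real.summable_pow_div_factorial x)
  refine this.congr fun i => ?_
  rw [Nat.add_comm]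

lemma inj_add (k : ℕ) : Function.Injective (fun i : ℕ => k + i) :=
  fun a b hab => Nat.add_left_cancel hab

lemma fk_eq (k : ℕ) (x : ℝ) : fk k x = ∑' i : ℕ, x ^ (k + i) / ((k + i)! : ℝ) := by
  have h := Function.Injective.tsum_eq (inj_add k)
      (f := fun i : ℕ => if k ≤ i then x ^ i / (i ! : ℝ) else 0) ?_
  · rw [fk, ← h]
    exact tsum_congr fun i => by simp [Nat.le_add_right]
  · intro b hb
    simp only [Function.mem_support, ne_eq, ite_eq_right_iff, not_forall] at hb
    obtain ⟨hkb, -⟩ := hb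
    exact ⟨b - k, Nat.add_sub_cancel' hkb⟩

lemma e_eq (k : ℕ) (x : ℝ) :
    (∑' m, e k x m) = ∑' i : ℕ, ((k + i : ℕ) : ℝ) * x ^ (k + i) / ((k + i)! : ℝ) := by
  have h := Function.Injective.tsum_eq (inj_add k) (f := e k x) ?_
  · rw [← h]
    exact tsum_congr fun i => by simp [e, Nat.le_add_right]
  · intro b hb
    simp only [e, Function.mem_support, ne_eq, ite_eq_right_iff, not_forall] at hb
    obtain ⟨hkb, -⟩ := hb
    exact ⟨b - k, Nat.add_sub_cancel' hkb⟩

lemma fk_pos (k : ℕ) {x : ℝ} (hx : 0 < x) : 0 < fk k x := by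
  rw [fk_eq]
  refine Summable.tsum_pos (summable_shift k x) (fun i => by positivity) 0 (by positivity)

lemma fk_nonneg (k : ℕ) {x : ℝ} (hx : 0 ≤ x) : 0 ≤ fk k x := by
  rw [fk_eq]
  exact tsum_nonneg fun i => by positivity

/-- `x * fk j x = ∑' m, e (j+1) x m`. -/
lemma mul_fk (j : ℕ) (x : ℝ) : x * fk j x = ∑' m, e (j + 1) x m := by
  rw [fk_eq, e_eq, ← tsum_mul_left]
  refine tsum_congr fun i => ?_
  have h1 : j + 1 + i = (j + i) + 1 := by omega
  have h2 : ((j + 1 + i)! : ℝ) = ((j + 1 + i : ℕ) : ℝ) * ((j + i)! : ℝ) := by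
    rw [h1, Nat.factorial_succ]
    push_cast
    ring
  have hne : ((j + i)! : ℝ) ≠ 0 := by positivity
  have hne2 : ((j + 1 + i : ℕ) : ℝ) ≠ 0 := by positivity
  rw [h2]
  rw [show x ^ (j + 1 + i) = x * x ^ (j + i) by rw [h1, pow_succ]; ring]
  field_simp

lemma fk_succ (k : ℕ) (x : ℝ) : fk k x = x ^ k / (k ! : ℝ) + fk (k + 1) x := by
  rw [fk_eq k x, Summable.tsum_eq_zero_add (summable_shift k x), fk_eq (k + 1) x]
  have h0 : x ^ (k + 0) / ((k + 0)! : ℝ) = x ^ k / (k ! : ℝ) := by norm_num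
  rw [h0]
  congr 1
  exact tsum_congr fun i => by rw [show k + (i + 1) = (k + 1) + i by omega]

lemma fk_ge (k : ℕ) {x : ℝ} (hx : 0 ≤ x) : x ^ k / (k ! : ℝ) ≤ fk k x := by
  rw [fk_eq]
  have := Summable.le_tsum (summable_shift k x) 0 (fun i _ => by positivity)
  simpa using this

lemma fk_le (k : ℕ) {x : ℝ} (hx0 : 0 ≤ x) (hx1 : x < 1) :
    fk k x ≤ x ^ k / (k ! : ℝ) * (1 - x)⁻¹ := by
  rw [fk_eq]
  have hterm : ∀ i : ℕ, x ^ (k + i) / ((k + i)! : ℝ) ≤ x ^ k / (k ! : ℝ) * x ^ i := by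
    intro i
    have hfac : (k ! : ℝ) ≤ ((k + i)! : ℝ) := by
      exact_mod_cast Nat.factorial_le (Nat.le_add_right k i)
    have hkf : (0 : ℝ) < (k ! : ℝ) := by exact_mod_cast Nat.factorial_pos k
    have h1 : x ^ (k + i) / ((k + i)! : ℝ) ≤ x ^ (k + i) / (k ! : ℝ) := by
      gcongr
    calc x ^ (k + i) / ((k + i)! : ℝ) ≤ x ^ (k + i) / (k ! : ℝ) := h1
      _ = x ^ k / (k ! : ℝ) * x ^ i := by rw [pow_add]; ring
  have hsum2 : Summable (fun i : ℕ => x ^ k / (k ! : ℝ) * x ^ i) :=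
    (summable_geometric_of_lt_one hx0 hx1).mul_left _
  calc (∑' i : ℕ, x ^ (k + i) / ((k + i)! : ℝ))
      ≤ ∑' i : ℕ, x ^ k / (k ! : ℝ) * x ^ i :=
        Summable.tsum_le_tsum hterm (summable_shift k x) hsum2
    _ = x ^ k / (k ! : ℝ) * (1 - x)⁻¹ := by
        rw [tsum_mul_left, tsum_geometric_of_lt_one hx0 hx1]

lemma continuous_fk (k : ℕ) : Continuous (fun x : ℝ => fk k x) := by
  have hrepr : ∀ x : ℝ, fk k x = Real.exp x - ∑ i ∈ Finset.range k, x ^ i / (i ! : ℝ) := by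
    intro x
    have hexp : Real.exp x = ∑' i : ℕ, x ^ i / (i ! : ℝ) := by
      rw [Real.exp_eq_exp_ℝ, NormedSpace.exp_eq_tsum_div]
    have hsplit := Summable.sum_add_tsum_nat_add (f := fun i : ℕ => x ^ i / (i ! : ℝ)) k
      (Real.summable_pow_div_factorial x)
    have h2 : fk k x = ∑' i : ℕ, x ^ (i + k) / ((i + k)! : ℝ) := by
      rw [fk_eq]
      exact tsum_congr fun i => by rw [Nat.add_comm]
    rw [h2, hexp, ← hsplit]
    ring
  simp only [funext hrepr]
  exact Real.continuous_exp.sub (continuous_finset_sum _ fun i _ => by fun_prop)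

/-- The key cross inequality. -/
lemma cross (j : ℕ) {x y : ℝ} (hx : 0 < x) (hxy : x < y) :
    x * fk j x * fk (j + 1) y < y * fk j y * fk (j + 1) x := by
  have hy : 0 < y := hx.trans hxy
  set k := j + 1 with hkdef
  have hk : 1 ≤ k := Nat.le_add_left 1 j
  -- F p = e k y p.1 * d x p.2 - e k x p.1 * d y p.2
  set F : ℕ × ℕ → ℝ := fun p => e k y p.1 * d k x p.2 - e k x p.1 * d k y p.2 with hF
  have hS1 : Summable (fun p : ℕ × ℕ => e k y p.1 * d k x p.2) :=
    (summable_e k hy.le).mul_of_nonneg (summable_d k x) (e_nonneg k hy.le) (d_nonneg k hx.le)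
  have hS2 : Summable (fun p : ℕ × ℕ => e k x p.1 * d k y p.2) :=
    (summable_e k hx.le).mul_of_nonneg (summable_d k y) (e_nonneg k hx.le) (d_nonneg k hy.le)
  have hSF : Summable F := hS1.sub hS2
  have hSFswap : Summable (fun p : ℕ × ℕ => F p.swap) :=
    ((Equiv.prodComm ℕ ℕ).summable_iff (f := F)).mpr hSF
  -- the symmetrized term is nonneg
  have hkey : ∀ m n : ℕ, m ≤ n →
      0 ≤ ((n : ℝ) - m) * (x ^ m * y ^ n - x ^ n * y ^ m) := by
    intro m n hmn
    obtain ⟨c, rfl⟩ := Nat.exists_eq_add_of_le hmn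
    have h1 : x ^ m * y ^ (m + c) - x ^ (m + c) * y ^ m
        = x ^ m * y ^ m * (y ^ c - x ^ c) := by
      rw [pow_add, pow_add]; ring
    have h2 : x ^ c ≤ y ^ c := pow_le_pow_left₀ hx.le hxy.le c
    have h3 : (0 : ℝ) ≤ ((m + c : ℕ) : ℝ) - m := by push_cast; linarith
    rw [h1]
    have : 0 ≤ x ^ m * y ^ m * (y ^ c - x ^ c) := by
      apply mul_nonneg (by positivity); linarith
    exact mul_nonneg h3 this
  have hGval : ∀ m n : ℕ, F (m, n) + F (n, m)
      = (if k ≤ m then 1 else 0) * (if k ≤ n then 1 else 0) *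
        (((n : ℝ) - m) * (x ^ m * y ^ n - x ^ n * y ^ m)) / ((m ! : ℝ) * (n ! : ℝ)) := by
    intro m n
    simp only [hF, e, d]
    split_ifs with h1 h2
    · have hm : ((m !) : ℝ) ≠ 0 := by positivity
      have hn : ((n !) : ℝ) ≠ 0 := by positivity
      field_simp
      ring
    all_goals simp
  have hGnonneg : ∀ p : ℕ × ℕ, 0 ≤ F p + F p.swap := by
    rintro ⟨m, n⟩
    show 0 ≤ F (m, n) + F (n, m)
    rw [hGval m n]
    rcases le_total m n with h | h
    · have := hkey m n h
      split_ifs <;> positivity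
    · have h0 := hkey n m h
      have heq : ((n : ℝ) - m) * (x ^ m * y ^ n - x ^ n * y ^ m)
          = ((m : ℝ) - n) * (x ^ n * y ^ m - x ^ m * y ^ n) := by ring
      rw [heq]
      split_ifs <;> positivity
  have hGpos : 0 < F (k, k + 1) + F (k + 1, k) := by
    rw [hGval k (k + 1)]
    have h1 : ((k + 1 : ℕ) : ℝ) - (k : ℝ) = 1 := by push_cast; ring
    have h2 : x ^ k * y ^ (k + 1) - x ^ (k + 1) * y ^ k = x ^ k * y ^ k * (y - x) := by
      ring
    rw [if_pos le_rfl, if_pos (Nat.le_succ k), h1, h2]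
    have : 0 < x ^ k * y ^ k * (y - x) := by
      apply mul_pos (by positivity); linarith
    positivity
  have hsumG : Summable (fun p : ℕ × ℕ => F p + F p.swap) := hSF.add hSFswap
  have hGsum_pos : 0 < ∑' p : ℕ × ℕ, (F p + F p.swap) :=
    Summable.tsum_pos hsumG hGnonneg (k, k + 1) hGpos
  have hswap_eq : (∑' p : ℕ × ℕ, F p.swap) = ∑' p : ℕ × ℕ, F p :=
    (Equiv.prodComm ℕ ℕ).tsum_eq F
  have hFpos : 0 < ∑' p : ℕ × ℕ, F p := by
    have := hGsum_pos
    rw [Summable.tsum_add hSF hSFswap, hswap_eq] at this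
    linarith
  -- identify the tsums with the products
  have hAyBx : y * fk j y * fk k x = ∑' p : ℕ × ℕ, e k y p.1 * d k x p.2 := by
    rw [mul_fk j y, fk_eq_tsum_d k x]
    exact Summable.tsum_mul_tsum (summable_e k hy.le) (summable_d k x) hS1
  have hAxBy : x * fk j x * fk k y = ∑' p : ℕ × ℕ, e k x p.1 * d k y p.2 := by
    rw [mul_fk j x, fk_eq_tsum_d k y]
    exact Summable.tsum_mul_tsum (summable_e k hx.le) (summable_d k y) hS2
  have hdiff : (∑' p : ℕ × ℕ, F p)
      = y * fk j y * fk k x - x * fk j x * fk k y := by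
    rw [hAyBx, hAxBy]
    exact Summable.tsum_sub hS1 hS2
  rw [hdiff] at hFpos
  linarith

end Stmt1Aux

open Stmt1Aux
open scoped Nat

/-- For fixed `k ≥ 1`, the function `λ ↦ λ f_{k-1}(λ) / f_k(λ)` is strictly increasing on
`(0, ∞)`, tends to `k` as `λ → 0⁺`, tends to `∞` as `λ → ∞`, and consequently for every
`c > k` there is a unique `λ > 0` with `c = λ f_{k-1}(λ) / f_k(λ)`. -/
theorem stmt_1 (k : ℕ) (hk : 1 ≤ k) :
    StrictMonoOn (fun l : ℝ => l * fk (k - 1) l / fk k l) (Set.Ioi 0) ∧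
    Tendsto (fun l : ℝ => l * fk (k - 1) l / fk k l) (nhdsWithin 0 (Set.Ioi 0)) (nhds (k : ℝ)) ∧
    Tendsto (fun l : ℝ => l * fk (k - 1) l / fk k l) atTop atTop ∧
    (∀ c : ℝ, (k : ℝ) < c → ∃! l : ℝ, 0 < l ∧ c = l * fk (k - 1) l / fk k l) := by
  obtain ⟨j, rfl⟩ : ∃ j, k = j + 1 := ⟨k - 1, by omega⟩
  have hsub : j + 1 - 1 = j := rfl
  set g : ℝ → ℝ := fun l => l * fk (j + 1 - 1) l / fk (j + 1) l with hg
  have hg' : ∀ l : ℝ, g l = l * fk j l / fk (j + 1) l := fun l => by rw [hg, hsub]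
  -- strict monotonicity
  have hmono : StrictMonoOn g (Set.Ioi 0) := by
    intro x hx y hy hxy
    simp only [hg', Set.mem_Ioi] at *
    rw [div_lt_div_iff₀ (fk_pos (j + 1) hx) (fk_pos (j + 1) hy)]
    exact cross j hx hxy
  -- tendsto at 0+
  have hbounds : ∀ l : ℝ, l ∈ Set.Ioo (0 : ℝ) 1 →
      ((j + 1 : ℕ) : ℝ) * (1 - l) ≤ g l ∧ g l ≤ ((j + 1 : ℕ) : ℝ) * (1 - l)⁻¹ := by
    intro l ⟨hl0, hl1⟩
    have hfkpos : 0 < fk (j + 1) l := fk_pos (j + 1) hl0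
    have hnum_lb : l ^ (j + 1) / (j ! : ℝ) ≤ l * fk j l := by
      have := fk_ge j hl0.le
      calc l ^ (j + 1) / (j ! : ℝ) = l * (l ^ j / (j ! : ℝ)) := by
            rw [pow_succ]; ring
        _ ≤ l * fk j l := mul_le_mul_of_nonneg_left this hl0.le
    have hnum_ub : l * fk j l ≤ l ^ (j + 1) / (j ! : ℝ) * (1 - l)⁻¹ := by
      have := fk_le j hl0.le hl1
      calc l * fk j l ≤ l * (l ^ j / (j ! : ℝ) * (1 - l)⁻¹) :=
            mul_le_mul_of_nonneg_left this hl0.le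
        _ = l ^ (j + 1) / (j ! : ℝ) * (1 - l)⁻¹ := by rw [pow_succ]; ring
    have hden_lb : l ^ (j + 1) / ((j + 1)! : ℝ) ≤ fk (j + 1) l := fk_ge (j + 1) hl0.le
    have hden_ub : fk (j + 1) l ≤ l ^ (j + 1) / ((j + 1)! : ℝ) * (1 - l)⁻¹ :=
      fk_le (j + 1) hl0.le hl1
    have hfac : ((j + 1)! : ℝ) = ((j + 1 : ℕ) : ℝ) * (j ! : ℝ) := by
      rw [Nat.factorial_succ]; push_cast; ring
    have hjf : (0 : ℝ) < (j ! : ℝ) := by exact_mod_cast Nat.factorial_pos j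
    have hjp : (0 : ℝ) < ((j + 1 : ℕ) : ℝ) := by positivity
    have hlp : (0 : ℝ) < l ^ (j + 1) := by positivity
    have h1l : (0 : ℝ) < 1 - l := by linarith
    constructor
    · rw [hg', ge_iff_le.symm, ge_iff_le, le_div_iff₀ hfkpos]
      calc ((j + 1 : ℕ) : ℝ) * (1 - l) * fk (j + 1) l
          ≤ ((j + 1 : ℕ) : ℝ) * (1 - l) * (l ^ (j + 1) / ((j + 1)! : ℝ) * (1 - l)⁻¹) := by
            apply mul_le_mul_of_nonneg_left hden_ub (by positivity)
        _ = l ^ (j + 1) / (j ! : ℝ) := by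
            rw [hfac]; field_simp
        _ ≤ l * fk j l := hnum_lb
    · rw [hg', div_le_iff₀ hfkpos]
      calc l * fk j l ≤ l ^ (j + 1) / (j ! : ℝ) * (1 - l)⁻¹ := hnum_ub
        _ = ((j + 1 : ℕ) : ℝ) * (1 - l)⁻¹ * (l ^ (j + 1) / ((j + 1)! : ℝ)) := by
            rw [hfac]; field_simp
        _ ≤ ((j + 1 : ℕ) : ℝ) * (1 - l)⁻¹ * fk (j + 1) l := by
            apply mul_le_mul_of_nonneg_left hden_lb (by positivity)
  have hmemIoo : Set.Ioo (0 : ℝ) 1 ∈ nhdsWithin (0 : ℝ) (Set.Ioi 0) :=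
    Ioo_mem_nhdsGT_of_mem ⟨le_rfl, one_pos⟩
  have htend0 : Tendsto g (nhdsWithin 0 (Set.Ioi 0)) (nhds ((j + 1 : ℕ) : ℝ)) := by
    have hlo : Tendsto (fun l : ℝ => ((j + 1 : ℕ) : ℝ) * (1 - l))
        (nhdsWithin 0 (Set.Ioi 0)) (nhds ((j + 1 : ℕ) : ℝ)) := by
      have : Tendsto (fun l : ℝ => ((j + 1 : ℕ) : ℝ) * (1 - l)) (nhds 0)
          (nhds (((j + 1 : ℕ) : ℝ) * (1 - 0))) :=
        (tendsto_const_nhds.sub tendsto_id).const_mul _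
      simpa using this.mono_left nhdsWithin_le_nhds
    have hhi : Tendsto (fun l : ℝ => ((j + 1 : ℕ) : ℝ) * (1 - l)⁻¹)
        (nhdsWithin 0 (Set.Ioi 0)) (nhds ((j + 1 : ℕ) : ℝ)) := by
      have h0 : Tendsto (fun l : ℝ => ((j + 1 : ℕ) : ℝ) * (1 - l)⁻¹) (nhds 0)
          (nhds (((j + 1 : ℕ) : ℝ) * (1 - 0)⁻¹)) := by
        exact Tendsto.mul tendsto_const_nhds
          (Tendsto.inv₀ (tendsto_const_nhds.sub tendsto_id) (by norm_num))
      simpa using h0.mono_left nhdsWithin_le_nhds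
    refine tendsto_of_tendsto_of_tendsto_of_le_of_le' hlo hhi ?_ ?_
    · filter_upwards [hmemIoo] with l hl using (hbounds l hl).1
    · filter_upwards [hmemIoo] with l hl using (hbounds l hl).2
  -- tendsto atTop
  have hge : ∀ l : ℝ, 1 ≤ l → l ≤ g l := by
    intro l hl
    have hl0 : (0 : ℝ) < l := lt_of_lt_of_le one_pos hl
    have hfkpos : 0 < fk (j + 1) l := fk_pos (j + 1) hl0
    rw [hg', le_div_iff₀ hfkpos]
    have hfkle : fk (j + 1) l ≤ fk j l := by
      have := fk_succ j l
      have hterm : 0 ≤ l ^ j / (j ! : ℝ) := by positivity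
      linarith
    exact mul_le_mul_of_nonneg_left hfkle hl0.le
  have htendTop : Tendsto g atTop atTop := by
    refine tendsto_atTop_mono' atTop ?_ tendsto_id
    filter_upwards [eventually_ge_atTop (1 : ℝ)] with l hl using hge l hl
  refine ⟨hmono, htend0, htendTop, ?_⟩
  -- existence and uniqueness
  intro c hc
  obtain ⟨a, ha, hga⟩ : ∃ a : ℝ, a ∈ Set.Ioi (0 : ℝ) ∧ g a < c := by
    have : ∀ᶠ l in nhdsWithin (0 : ℝ) (Set.Ioi 0), g l < c :=
      htend0.eventually_lt_const hc
    exact (this.and self_mem_nhdsWithin).exists.imp fun a h => ⟨h.2, h.1⟩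
  obtain ⟨b, hb1, hgb⟩ : ∃ b : ℝ, a + 1 ≤ b ∧ c < g b := by
    have h1 : ∀ᶠ l in atTop, c < g l := htendTop.eventually_gt_atTop c
    have h2 : ∀ᶠ l : ℝ in atTop, a + 1 ≤ l := eventually_ge_atTop (a + 1)
    exact (h2.and h1).exists.imp fun b h => ⟨h.1, h.2⟩
  have ha0 : (0 : ℝ) < a := ha
  have hb0 : (0 : ℝ) < b := by linarith
  have hab : a < b := by linarith
  have hcont : ContinuousOn g (Set.Icc a b) := by
    apply ContinuousOn.div
    · exact (continuous_id.mul (continuous_fk (j + 1 - 1))).continuousOn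
    · exact (continuous_fk (j + 1)).continuousOn
    · intro l hl
      exact (fk_pos (j + 1) (lt_of_lt_of_le ha0 hl.1)).ne'
  have hIcc : c ∈ Set.Icc (g a) (g b) := ⟨hga.le, hgb.le⟩
  obtain ⟨l, hl, hgl⟩ := intermediate_value_Icc hab.le hcont hIcc
  have hl0 : (0 : ℝ) < l := lt_of_lt_of_le ha0 hl.1
  refine ⟨l, ⟨hl0, hgl.symm⟩, ?_⟩
  rintro m ⟨hm0, hmc⟩
  have hgm : g m = g l := by rw [hgl]; exact hmc.symm
  exact hmono.injOn hm0 hl0 hgm
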